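/- Let A be a finite nonempty alphabet and d ≥ 1. If L is a regular language over A that is Π₁_d[N]-definable, then L is Π₁_d[Reg]-definable. -/

import Mathlib

def NumPredEncoding {d : ℕ} (N : (Fin d → ℕ) → ℕ → Prop) :
    Language (Finset (Fin d)) :=
  {u | ∃ p : Fin d → Fin u.length,
    (∀ j : Fin d, ∀ q : Fin u.length, j ∈ u.get q ↔ q = p j) ∧
    N (fun j => (p j : ℕ)) u.length}

def IsRegularNumPred {d : ℕ} (N : (Fin d → ℕ) → ℕ → Prop) : Prop :=
  (NumPredEncoding N).IsRegular

def Pi1NDefinable (A : Type*) (d : ℕ) (L : Set (List A)) : Prop :=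
  ∃ N : (Fin d → A) → (Fin d → ℕ) → ℕ → Prop,
    ∀ w : List A, w ∈ L ↔ ∀ i : Fin d → Fin w.length,
      N (fun j => w.get (i j)) (fun j => (i j : ℕ)) w.length

def Pi1RegDefinable (A : Type*) (d : ℕ) (L : Set (List A)) : Prop :=
  ∃ N : (Fin d → A) → (Fin d → ℕ) → ℕ → Prop,
    (∀ a : Fin d → A, IsRegularNumPred (N a)) ∧
    ∀ w : List A, w ∈ L ↔ ∀ i : Fin d → Fin w.length,
      N (fun j => w.get (i j)) (fun j => (i j : ℕ)) w.length

/-- The NFA over the marked alphabet recognizing the encoding of the canonical predicate. -/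
def markNFA {A : Type} {d : ℕ} {σ : Type} (a : Fin d → A) (M : DFA A σ) :
    NFA (Finset (Fin d)) (σ × Finset (Fin d)) where
  step := fun x s =>
    {y | ∃ c : A, (∀ j ∈ s, a j = c) ∧ Disjoint s x.2 ∧ y = (M.step x.1 c, x.2 ∪ s)}
  start := {(M.start, ∅)}
  accept := {x | x.1 ∈ M.accept ∧ x.2 = Finset.univ}

theorem mark_eval {A : Type} {d : ℕ} {σ : Type} (a : Fin d → A) (M : DFA A σ)
    (u : List (Finset (Fin d))) (x : σ × Finset (Fin d)) :
    x ∈ (markNFA a M).eval u ↔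
      ∃ (w : List A) (hw : w.length = u.length), M.eval w = x.1 ∧
        (∀ (q : ℕ) (hq : q < u.length) (j : Fin d), j ∈ u[q] → w[q]'(by omega) = a j) ∧
        (∀ j : Fin d, j ∈ x.2 ↔ ∃ (q : ℕ) (_ : q < u.length), j ∈ u[q]) ∧
        (∀ (j : Fin d) (q₁ q₂ : ℕ) (h₁ : q₁ < u.length) (h₂ : q₂ < u.length),
          j ∈ u[q₁] → j ∈ u[q₂] → q₁ = q₂) := by
  induction u using List.reverseRecOn generalizing x with
  | nil =>
      constructor
      · intro hx
        have hx' : x = (M.start, ∅) := hx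
        subst hx'
        refine ⟨[], rfl, rfl, ?_, by simp, ?_⟩
        · intro q hq; simp at hq
        · intro j q₁ q₂ h₁; simp at h₁
      · rintro ⟨w, hw, h1, _, h2, _⟩
        have hw' : w = [] := List.eq_nil_of_length_eq_zero hw
        subst hw'
        have hx2 : x.2 = ∅ := by
          ext j
          simp only [Finset.notMem_empty, iff_false]
          intro hj
          obtain ⟨q, hq, _⟩ := (h2 j).mp hj
          simp at hq
        have : x = (M.start, ∅) := Prod.ext h1.symm hx2
        subst this
        rfl
  | append_singleton u s ih =>
      rw [NFA.eval_append_singleton, NFA.mem_stepSet]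
      constructor
      · rintro ⟨y, hy, c, hc, hdisj, rfl⟩
        obtain ⟨w, hw, heval, hlet, hmem, huniq⟩ := (ih y).mp hy
        refine ⟨w ++ [c], by simp [hw], ?_, ?_, ?_, ?_⟩
        · simp [DFA.eval_append_singleton, heval]
        · intro q hq j hj
          simp only [List.length_append, List.length_singleton] at hq
          rcases lt_or_eq_of_le (Nat.lt_succ_iff.mp hq) with h | h
          · have hj' : j ∈ u[q] := by rwa [List.getElem_append_left h] at hj
            rw [List.getElem_append_left (show q < w.length by omega)]
            exact hlet q h j hj'
          · subst h
            have hju : j ∈ s := by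
              rwa [List.getElem_concat_length (l := u) (a := s) (i := u.length) rfl] at hj
            rw [List.getElem_concat_length (l := w) (a := c) (i := u.length) (by omega)]
            exact (hc j hju).symm
        · intro j
          simp only [Finset.mem_union]
          constructor
          · rintro (hj | hj)
            · obtain ⟨q, hq, hq'⟩ := (hmem j).mp hj
              exact ⟨q, by simp; omega, by rwa [List.getElem_append_left hq]⟩
            · exact ⟨u.length, by simp, by rwa [List.getElem_concat_length (l := u) (a := s) (i := u.length) rfl]⟩
          · rintro ⟨q, hq, hj⟩
            simp only [List.length_append, List.length_singleton] at hq
            rcases lt_or_eq_of_le (Nat.lt_succ_iff.mp hq) with h | h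
            · left
              exact (hmem j).mpr ⟨q, h, by rwa [List.getElem_append_left h] at hj⟩
            · right
              subst h
              rwa [List.getElem_concat_length (l := u) (a := s) (i := u.length) rfl] at hj
        · intro j q₁ q₂ h₁ h₂ hj₁ hj₂
          simp only [List.length_append, List.length_singleton] at h₁ h₂
          have key : ∀ q (h : q < u.length + 1), j ∈ (u ++ [s])[q]'(by simpa using h) →
              q < u.length → j ∈ y.2 := by
            intro q h hj hq
            exact (hmem j).mpr ⟨q, hq, by rwa [List.getElem_append_left hq] at hj⟩
          have keys : ∀ q (h : q < u.length + 1), j ∈ (u ++ [s])[q]'(by simpa using h) →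
              q = u.length → j ∈ s := by
            intro q h hj hq
            subst hq
            rwa [List.getElem_concat_length (l := u) (a := s) (i := u.length) rfl] at hj
          rcases lt_or_eq_of_le (Nat.lt_succ_iff.mp h₁) with ha | ha <;>
            rcases lt_or_eq_of_le (Nat.lt_succ_iff.mp h₂) with hb | hb
          · exact huniq j q₁ q₂ ha hb (by rwa [List.getElem_append_left ha] at hj₁)
              (by rwa [List.getElem_append_left hb] at hj₂)
          · exact absurd (key q₁ h₁ hj₁ ha) (Finset.disjoint_left.mp hdisj (keys q₂ h₂ hj₂ hb))
          · exact absurd (key q₂ h₂ hj₂ hb) (Finset.disjoint_left.mp hdisj (keys q₁ h₁ hj₁ ha))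
          · omega
      · rintro ⟨w, hw, heval, hlet, hmem, huniq⟩
        simp only [List.length_append, List.length_singleton] at hw
        have hwne : w ≠ [] := by intro h; subst h; simp at hw
        obtain ⟨w', c, rfl⟩ := (List.eq_nil_or_concat' w).resolve_left hwne
        simp only [List.length_append, List.length_singleton] at hw
        classical
        set T : Finset (Fin d) :=
          Finset.univ.filter (fun j => ∃ (q : ℕ) (_ : q < u.length), j ∈ u[q]) with hT
        refine ⟨(M.eval w', T), (ih _).mpr ⟨w', by omega, rfl, ?_, ?_, ?_⟩, c, ?_, ?_, ?_⟩
        · intro q hq j hj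
          have := hlet q (by simp; omega) j
            (by rwa [List.getElem_append_left hq])
          rwa [List.getElem_append_left (by omega)] at this
        · intro j
          simp [hT]
        · intro j q₁ q₂ h₁ h₂ hj₁ hj₂
          exact huniq j q₁ q₂ (by simp; omega) (by simp; omega)
            (by rwa [List.getElem_append_left h₁])
            (by rwa [List.getElem_append_left h₂])
        · intro j hj
          have := hlet u.length (by simp) j
            (by rwa [List.getElem_concat_length (l := u) (a := s) (i := u.length) rfl])
          rw [List.getElem_concat_length (l := w') (a := c) (i := u.length) (by omega)] at this
          exact this.symm
        · rw [Finset.disjoint_left]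
          intro j hjs hjT
          simp only [hT, Finset.mem_filter, Finset.mem_univ, true_and] at hjT
          obtain ⟨q, hq, hjq⟩ := hjT
          have : q = u.length := huniq j q u.length (by simp; omega) (by simp)
            (by rwa [List.getElem_append_left hq])
            (by rwa [List.getElem_concat_length (l := u) (a := s) (i := u.length) rfl])
          omega
        · have hx2 : x.2 = T ∪ s := by
            ext j
            rw [hmem j]
            simp only [Finset.mem_union, hT, Finset.mem_filter, Finset.mem_univ, true_and]
            constructor
            · rintro ⟨q, hq, hj⟩
              simp only [List.length_append, List.length_singleton] at hq
              rcases lt_or_eq_of_le (Nat.lt_succ_iff.mp hq) with h | h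
              · exact Or.inl ⟨q, h, by rwa [List.getElem_append_left h] at hj⟩
              · subst h
                exact Or.inr (by rwa [List.getElem_concat_length (l := u) (a := s) (i := u.length) rfl] at hj)
            · rintro (⟨q, hq, hj⟩ | hj)
              · exact ⟨q, by simp; omega, by rwa [List.getElem_append_left hq]⟩
              · exact ⟨u.length, by simp, by rwa [List.getElem_concat_length (l := u) (a := s) (i := u.length) rfl]⟩
          have hx1 : x.1 = M.step (M.eval w') c := by
            rw [← heval, DFA.eval_append_singleton]
          exact Prod.ext hx1 hx2

theorem mark_accepts {A : Type} {d : ℕ} {σ : Type} (a : Fin d → A) (M : DFA A σ) :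
    (markNFA a M).accepts = NumPredEncoding (fun p n =>
      ∃ w ∈ M.accepts, w.length = n ∧
        ∀ (j : Fin d) (h : p j < w.length), w[p j] = a j) := by
  ext u
  constructor
  · rintro ⟨x, ⟨hacc, huniv⟩, hx⟩
    obtain ⟨w, hw, heval, hlet, hmem, huniq⟩ := (mark_eval a M u x).mp hx
    have hex : ∀ j : Fin d, ∃ q : Fin u.length, j ∈ u.get q := by
      intro j
      have : j ∈ x.2 := by rw [huniv]; exact Finset.mem_univ j
      obtain ⟨q, hq, hj⟩ := (hmem j).mp this
      exact ⟨⟨q, hq⟩, by simpa [List.get_eq_getElem] using hj⟩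
    choose p hp using hex
    refine ⟨p, ?_, w, ?_, hw, ?_⟩
    · intro j q
      constructor
      · intro hj
        exact Fin.ext (huniq j q (p j) q.isLt (p j).isLt
          (by simpa [List.get_eq_getElem] using hj)
          (by simpa [List.get_eq_getElem] using hp j))
      · rintro rfl; exact hp j
    · rw [DFA.mem_accepts, heval]; exact hacc
    · intro j hj
      have := hlet (p j) (by omega) j (by simpa [List.get_eq_getElem] using hp j)
      exact this
  · rintro ⟨p, hmark, w, hwacc, hwlen, hwlet⟩
    refine ⟨(M.eval w, Finset.univ), ⟨(DFA.mem_accepts M).mp hwacc, rfl⟩, ?_⟩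
    refine (mark_eval a M u _).mpr ⟨w, hwlen, rfl, ?_, ?_, ?_⟩
    · intro q hq j hj
      have hq' : (⟨q, hq⟩ : Fin u.length) = p j := (hmark j ⟨q, hq⟩).mp
        (by simpa [List.get_eq_getElem] using hj)
      have h2 := hwlet j (by rw [hwlen]; exact (p j).isLt)
      have hqq : q = ((p j : ℕ)) := congrArg Fin.val hq'
      subst hqq
      simpa using h2
    · intro j
      simp only [Finset.mem_univ, true_iff]
      exact ⟨p j, (p j).isLt, by simpa [List.get_eq_getElem] using (hmark j (p j)).mpr rfl⟩
    · intro j q₁ q₂ h₁ h₂ hj₁ hj₂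
      have e₁ : (⟨q₁, h₁⟩ : Fin u.length) = p j := (hmark j ⟨q₁, h₁⟩).mp
        (by simpa [List.get_eq_getElem] using hj₁)
      have e₂ : (⟨q₂, h₂⟩ : Fin u.length) = p j := (hmark j ⟨q₂, h₂⟩).mp
        (by simpa [List.get_eq_getElem] using hj₂)
      have := e₁.trans e₂.symm
      exact congrArg Fin.val this

theorem pi1_regular_collapse (A : Type) [Fintype A] [Nonempty A] (d : ℕ) (hd : 1 ≤ d)
    (L : Set (List A)) (hreg : Language.IsRegular (L : Language A))
    (h : Pi1NDefinable A d L) : Pi1RegDefinable A d L := by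
  obtain ⟨σ, _, M, hM⟩ := hreg
  obtain ⟨N, hN⟩ := h
  refine ⟨fun a p n => ∃ w ∈ M.accepts, w.length = n ∧
      ∀ (j : Fin d) (h : p j < w.length), w[p j] = a j, ?_, ?_⟩
  · intro a
    exact ⟨Set (σ × Finset (Fin d)), inferInstance, (markNFA a M).toDFA,
      by rw [NFA.toDFA_correct, mark_accepts]⟩
  · intro w
    constructor
    · intro hw i
      refine ⟨w, ?_, rfl, ?_⟩
      · rw [hM]; exact hw
      · intro j hj
        simp [List.get_eq_getElem]
    · intro hi
      rw [hN w]
      intro i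
      obtain ⟨v, hvacc, hvlen, hvlet⟩ := hi i
      have hvL : v ∈ L := by rw [← hM]; exact hvacc
      have hNv := (hN v).mp hvL (fun j => Fin.cast hvlen.symm (i j))
      have e1 : (fun j => v.get (Fin.cast hvlen.symm (i j))) = fun j => w.get (i j) := by
        funext j
        have := hvlet j (by rw [hvlen]; exact (i j).isLt)
        simpa [List.get_eq_getElem] using this
      have e2 : (fun j => ((Fin.cast hvlen.symm (i j) : Fin v.length) : ℕ)) =
          fun j => ((i j : ℕ)) := rfl
      rw [e1, e2, hvlen] at hNv
      exact hNv
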